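/- For every d ≥ 3, the matrix R^{(d)} = (1/d⁴)·I + (6/(d²(d−2)))·Q_d^{(−)} on ℂ^d⊗ℂ^d⊗ℂ^d is positive semidefinite and its partial traces over each of the three tensor factors all equal the Werner state ρ_W^{(d)}; consequently the Werner state ρ_W^{(d)} is a Bell class state for every d ≥ 3. -/

import Mathlib

open Matrix
open scoped Kronecker ComplexOrder

namespace BellPaper

variable {α β γ : Type*} [Fintype α] [Fintype β] [Fintype γ]

/-- Partial trace over the first factor of a threefold tensor product. -/
noncomputable def ptr1 (T : Matrix ((α × β) × γ) ((α × β) × γ) ℂ) :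
    Matrix (β × γ) (β × γ) ℂ :=
  fun p q => ∑ i : α, T ((i, p.1), p.2) ((i, q.1), q.2)

/-- Partial trace over the second factor of a threefold tensor product. -/
noncomputable def ptr2 (T : Matrix ((α × β) × γ) ((α × β) × γ) ℂ) :
    Matrix (α × γ) (α × γ) ℂ :=
  fun p q => ∑ j : β, T ((p.1, j), p.2) ((q.1, j), q.2)

/-- Partial trace over the third factor of a threefold tensor product. -/
noncomputable def ptr3 (T : Matrix ((α × β) × γ) ((α × β) × γ) ℂ) :
    Matrix (α × β) (α × β) ℂ :=
  fun p q => ∑ k : γ, T (p, k) (q, k)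

/-- Partial trace over the second factor of a twofold tensor product. -/
noncomputable def ptrB (M : Matrix (α × β) (α × β) ℂ) : Matrix α α ℂ :=
  fun i i' => ∑ j : β, M (i, j) (i', j)

/-- A density matrix: positive semidefinite with unit trace. -/
def IsDensityMatrix {n : Type*} [Fintype n] (ρ : Matrix n n ℂ) : Prop :=
  ρ.PosSemidef ∧ ρ.trace = 1

/-- Source-operator of type `T₁₂₂` for a state on ℂ^{d₁}⊗ℂ^{d₂}. -/
def IsSource122 {d₁ d₂ : ℕ} (ρ : Matrix (Fin d₁ × Fin d₂) (Fin d₁ × Fin d₂) ℂ)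
    (T : Matrix ((Fin d₁ × Fin d₂) × Fin d₂) ((Fin d₁ × Fin d₂) × Fin d₂) ℂ) : Prop :=
  T.IsHermitian ∧ ptr2 T = ρ ∧ ptr3 T = ρ

/-- Source-operator of type `T₁₁₂` for a state on ℂ^{d₁}⊗ℂ^{d₂}. -/
def IsSource112 {d₁ d₂ : ℕ} (ρ : Matrix (Fin d₁ × Fin d₂) (Fin d₁ × Fin d₂) ℂ)
    (S : Matrix ((Fin d₁ × Fin d₁) × Fin d₂) ((Fin d₁ × Fin d₁) × Fin d₂) ℂ) : Prop :=
  S.IsHermitian ∧ ptr1 S = ρ ∧ ptr2 S = ρ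

/-- A DSO state: a density matrix admitting a positive semidefinite source-operator. -/
def IsDSO {d₁ d₂ : ℕ} (ρ : Matrix (Fin d₁ × Fin d₂) (Fin d₁ × Fin d₂) ℂ) : Prop :=
  IsDensityMatrix ρ ∧
    ((∃ T, T.PosSemidef ∧ IsSource122 ρ T) ∨ (∃ S, S.PosSemidef ∧ IsSource112 ρ S))

/-- A Bell class state: a density matrix admitting a density source-operator with the
special dilation property (all three partial traces equal the state). -/
def IsBellClass {d : ℕ} (ρ : Matrix (Fin d × Fin d) (Fin d × Fin d) ℂ) : Prop :=
  IsDensityMatrix ρ ∧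
    ∃ T : Matrix ((Fin d × Fin d) × Fin d) ((Fin d × Fin d) × Fin d) ℂ,
      T.PosSemidef ∧ ptr1 T = ρ ∧ ptr2 T = ρ ∧ ptr3 T = ρ

/-- The operator (spectral) norm of a matrix acting on a Euclidean space. -/
noncomputable def opNorm {n : Type*} [Fintype n] [DecidableEq n] (W : Matrix n n ℂ) : ℝ :=
  ‖Matrix.toEuclideanCLM (𝕜 := ℂ) W‖

/-- The swap (permutation) operator `V_d` on ℂ^d ⊗ ℂ^d. -/
noncomputable def swapMat (d : ℕ) : Matrix (Fin d × Fin d) (Fin d × Fin d) ℂ :=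
  fun p q => if p.1 = q.2 ∧ p.2 = q.1 then 1 else 0

/-- The Werner state on ℂ^d ⊗ ℂ^d. -/
noncomputable def werner (d : ℕ) : Matrix (Fin d × Fin d) (Fin d × Fin d) ℂ :=
  (((d : ℂ) + 1) / (d : ℂ) ^ 3) • (1 : Matrix (Fin d × Fin d) (Fin d × Fin d) ℂ)
    - ((d : ℂ) ^ 2)⁻¹ • swapMat d

/-- The triple of indices of a point of the threefold product. -/
def triple {d : ℕ} (p : (Fin d × Fin d) × Fin d) : Fin 3 → Fin d := ![p.1.1, p.1.2, p.2]

/-- The unitary permuting the three tensor factors of ℂ^d ⊗ ℂ^d ⊗ ℂ^d according to π. -/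
noncomputable def permMat (d : ℕ) (π : Equiv.Perm (Fin 3)) :
    Matrix ((Fin d × Fin d) × Fin d) ((Fin d × Fin d) × Fin d) ℂ :=
  fun p q => if ∀ i, triple p (π i) = triple q i then 1 else 0

/-- The antisymmetrization projection `Q_d^{(-)}` on ℂ^d ⊗ ℂ^d ⊗ ℂ^d. -/
noncomputable def antisym (d : ℕ) :
    Matrix ((Fin d × Fin d) × Fin d) ((Fin d × Fin d) × Fin d) ℂ :=
  (6 : ℂ)⁻¹ • ∑ π : Equiv.Perm (Fin 3), (((Equiv.Perm.sign π : ℤ) : ℂ)) • permMat d π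

/-- Tensor product of two vectors. -/
def tens {m n : Type*} (u : m → ℂ) (v : n → ℂ) : m × n → ℂ := fun p => u p.1 * v p.2

/-- The rank-one operator |v⟩⟨v|. -/
noncomputable def outer {n : Type*} (v : n → ℂ) : Matrix n n ℂ :=
  Matrix.vecMulVec v (star v)



section Auxiliary

lemma forall_fin3 {P : Fin 3 → Prop} : (∀ i, P i) ↔ P 0 ∧ P 1 ∧ P 2 := by
  constructor
  · intro h; exact ⟨h 0, h 1, h 2⟩
  · rintro ⟨h0, h1, h2⟩ i; fin_cases i <;> assumption

def mk3 {d : ℕ} (f : Fin 3 → Fin d) : (Fin d × Fin d) × Fin d := ((f 0, f 1), f 2)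

lemma triple_mk3 {d : ℕ} (f : Fin 3 → Fin d) : triple (mk3 f) = f := by
  funext i; fin_cases i <;> rfl

lemma mk3_triple {d : ℕ} (p : (Fin d × Fin d) × Fin d) : mk3 (triple p) = p := rfl

lemma permMat_mul (d : ℕ) (π σ : Equiv.Perm (Fin 3)) :
    permMat d π * permMat d σ = permMat d (π * σ) := by
  ext p q
  simp only [Matrix.mul_apply, permMat]
  rw [Finset.sum_eq_single (mk3 (fun i => triple p (π i)))]
  · by_cases h : ∀ i, triple p ((π * σ) i) = triple q i
    · rw [if_pos h, if_pos, if_pos, mul_one]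
      · intro i; rw [triple_mk3]; exact h i
      · intro i; rw [triple_mk3]
    · rw [if_neg h]
      by_cases h2 : ∀ i, triple (mk3 fun i => triple p (π i)) (σ i) = triple q i
      · exfalso; apply h; intro i
        have := h2 i; rwa [triple_mk3] at this
      · rw [if_neg h2, mul_zero]
  · intro r _ hr
    by_cases h1 : ∀ i, triple p (π i) = triple r i
    · exfalso; apply hr
      have : triple r = fun i => triple p (π i) := by funext i; exact (h1 i).symm
      rw [← mk3_triple r, this]
    · rw [if_neg h1, zero_mul]
  · intro h; exact absurd (Finset.mem_univ _) h

lemma permMat_conjTranspose (d : ℕ) (π : Equiv.Perm (Fin 3)) :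
    (permMat d π)ᴴ = permMat d π⁻¹ := by
  ext p q
  simp only [Matrix.conjTranspose_apply, permMat]
  have : (∀ i, triple q (π i) = triple p i) ↔ (∀ i, triple p (π⁻¹ i) = triple q i) := by
    constructor
    · intro h i; have := h (π⁻¹ i); simpa using this.symm
    · intro h i; have := h (π i); simpa using this.symm
  rw [if_congr this rfl rfl]
  split <;> simp

noncomputable def sgnsum (d : ℕ) :
    Matrix ((Fin d × Fin d) × Fin d) ((Fin d × Fin d) × Fin d) ℂ :=
  ∑ π : Equiv.Perm (Fin 3), (((Equiv.Perm.sign π : ℤ) : ℂ)) • permMat d π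

lemma antisym_eq (d : ℕ) : antisym d = (6 : ℂ)⁻¹ • sgnsum d := rfl

lemma sgnsum_mul (d : ℕ) : sgnsum d * sgnsum d = (6 : ℂ) • sgnsum d := by
  nth_rewrite 1 [sgnsum]
  rw [Finset.sum_mul]
  have key : ∀ π : Equiv.Perm (Fin 3),
      ((((Equiv.Perm.sign π : ℤ) : ℂ)) • permMat d π) * sgnsum d = sgnsum d := by
    intro π
    rw [sgnsum, Finset.mul_sum]
    rw [← Equiv.sum_comp (Equiv.mulLeft π⁻¹) (fun σ => (((Equiv.Perm.sign π : ℤ) : ℂ)) • permMat d π * ((((Equiv.Perm.sign σ : ℤ) : ℂ)) • permMat d σ))]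
    apply Finset.sum_congr rfl
    intro σ _
    simp only [Equiv.coe_mulLeft]
    rw [Matrix.smul_mul, Matrix.mul_smul, permMat_mul, smul_smul]
    congr 1
    · norm_cast
      rw [← _root_.map_mul]
      congr 1
      group
    · congr 1
      group
  rw [Finset.sum_congr rfl fun π _ => key π, Finset.sum_const, Finset.card_univ]
  have : Fintype.card (Equiv.Perm (Fin 3)) = 6 := by
    rw [Fintype.card_perm]; rfl
  rw [this, ← Nat.cast_smul_eq_nsmul ℂ]
  norm_num

lemma sgnsum_herm (d : ℕ) : (sgnsum d)ᴴ = sgnsum d := by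
  rw [sgnsum, Matrix.conjTranspose_sum]
  rw [← Equiv.sum_comp (Equiv.inv (Equiv.Perm (Fin 3)))
    (fun σ => ((((Equiv.Perm.sign σ : ℤ) : ℂ)) • permMat d σ)ᴴ)]
  apply Finset.sum_congr rfl
  intro σ _
  simp only [Equiv.inv_apply]
  rw [Matrix.conjTranspose_smul, permMat_conjTranspose]
  simp [Equiv.Perm.sign_inv]

lemma antisym_herm (d : ℕ) : (antisym d).IsHermitian := by
  unfold Matrix.IsHermitian
  rw [antisym_eq, Matrix.conjTranspose_smul, sgnsum_herm]
  norm_num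

lemma antisym_mul_self (d : ℕ) : antisym d * antisym d = antisym d := by
  rw [antisym_eq, Matrix.smul_mul, Matrix.mul_smul, sgnsum_mul, smul_smul, smul_smul]
  norm_num

lemma antisym_posSemidef (d : ℕ) : (antisym d).PosSemidef := by
  have : antisym d = (antisym d)ᴴ * antisym d := by
    rw [antisym_herm d, antisym_mul_self]
  rw [this]
  exact Matrix.posSemidef_conjTranspose_mul_self _

lemma posSemidef_smul' {n : Type*} [Fintype n] {M : Matrix n n ℂ} (hM : M.PosSemidef)
    {c : ℂ} (hc : 0 ≤ c) : (c • M).PosSemidef := by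
  have hcs : star c = c := by
    rw [Complex.star_def, Complex.conj_eq_iff_im]
    exact ((Complex.nonneg_iff).mp hc).2.symm
  refine Matrix.posSemidef_iff_dotProduct_mulVec.mpr ⟨?_, ?_⟩
  · unfold Matrix.IsHermitian
    rw [Matrix.conjTranspose_smul, hcs, hM.1]
  · intro x
    rw [Matrix.smul_mulVec, dotProduct_smul]
    exact mul_nonneg hc (hM.dotProduct_mulVec_nonneg x)

lemma posSemidef_ptr3 [DecidableEq γ] {R : Matrix ((α × β) × γ) ((α × β) × γ) ℂ}
    (h : R.PosSemidef) : (ptr3 R).PosSemidef := by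
  refine Matrix.posSemidef_iff_dotProduct_mulVec.mpr ⟨?_, ?_⟩
  · unfold Matrix.IsHermitian
    ext p q
    simp only [Matrix.conjTranspose_apply, ptr3, star_sum]
    apply Finset.sum_congr rfl
    intro k _
    rw [← Matrix.conjTranspose_apply, h.1]
  · intro x
    set y : γ → ((α × β) × γ) → ℂ := fun k r => if r.2 = k then x r.1 else 0 with hy
    have inner : ∀ (k : γ) (r : (α × β) × γ),
        (∑ r' : (α × β) × γ, R r r' * y k r') = ∑ q : α × β, R r (q, k) * x q := by
      intro k r
      rw [Fintype.sum_prod_type]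
      simp [hy, mul_ite, mul_zero]
    have key : ∀ k, star (y k) ⬝ᵥ R *ᵥ y k
        = ∑ p : α × β, ∑ q : α × β, star (x p) * (R (p, k) (q, k) * x q) := by
      intro k
      simp only [dotProduct, mulVec, Pi.star_apply]
      rw [Fintype.sum_prod_type]
      have hs : ∀ p : α × β,
          (∑ j : γ, star (y k (p, j)) * ∑ r' : (α × β) × γ, R (p, j) r' * y k r')
            = star (x p) * ∑ r' : (α × β) × γ, R (p, k) r' * y k r' := by
        intro p
        simp [hy, apply_ite, ite_mul, zero_mul, Finset.sum_ite_eq']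
      rw [Finset.sum_congr rfl fun p _ => hs p]
      apply Finset.sum_congr rfl; intro p _
      rw [inner k (p, k), Finset.mul_sum]
    have lhs : star x ⬝ᵥ (ptr3 R) *ᵥ x
        = ∑ p : α × β, ∑ q : α × β, ∑ k : γ, star (x p) * (R (p, k) (q, k) * x q) := by
      simp only [dotProduct, mulVec, ptr3, Pi.star_apply, Finset.mul_sum, Finset.sum_mul]
    rw [lhs, Finset.sum_congr rfl fun (p : α × β) (_ : p ∈ Finset.univ) => Finset.sum_comm,
      Finset.sum_comm]
    refine Finset.sum_nonneg fun k _ => ?_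
    rw [← key k]
    exact h.dotProduct_mulVec_nonneg (y k)

/-! Enumeration of the symmetric group on three letters. -/

def s01 : Equiv.Perm (Fin 3) := Equiv.swap 0 1
def s02 : Equiv.Perm (Fin 3) := Equiv.swap 0 2
def s12 : Equiv.Perm (Fin 3) := Equiv.swap 1 2
def c3 : Equiv.Perm (Fin 3) := Equiv.swap 0 1 * Equiv.swap 1 2

lemma univ_perm_fin3 : (Finset.univ : Finset (Equiv.Perm (Fin 3))) =
    {1, s01, s02, s12, c3, c3 * c3} := by decide

lemma sum_perm_fin3 {M : Type*} [AddCommMonoid M] (f : Equiv.Perm (Fin 3) → M) :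
    ∑ π : Equiv.Perm (Fin 3), f π =
      f 1 + f s01 + f s02 + f s12 + f c3 + f (c3 * c3) := by
  rw [univ_perm_fin3]
  rw [show ({1, s01, s02, s12, c3, c3 * c3} : Finset (Equiv.Perm (Fin 3)))
      = insert 1 (insert s01 (insert s02 (insert s12 (insert c3 {c3 * c3})))) from rfl]
  rw [Finset.sum_insert (by decide), Finset.sum_insert (by decide),
    Finset.sum_insert (by decide), Finset.sum_insert (by decide),
    Finset.sum_insert (by decide), Finset.sum_singleton]
  abel

lemma one_0 : (1 : Equiv.Perm (Fin 3)) 0 = 0 := rfl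
lemma one_1 : (1 : Equiv.Perm (Fin 3)) 1 = 1 := rfl
lemma one_2 : (1 : Equiv.Perm (Fin 3)) 2 = 2 := rfl
lemma s01_0 : s01 0 = 1 := by decide
lemma s01_1 : s01 1 = 0 := by decide
lemma s01_2 : s01 2 = 2 := by decide
lemma s02_0 : s02 0 = 2 := by decide
lemma s02_1 : s02 1 = 1 := by decide
lemma s02_2 : s02 2 = 0 := by decide
lemma s12_0 : s12 0 = 0 := by decide
lemma s12_1 : s12 1 = 2 := by decide
lemma s12_2 : s12 2 = 1 := by decide
lemma c3_0 : c3 0 = 1 := by decide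
lemma c3_1 : c3 1 = 2 := by decide
lemma c3_2 : c3 2 = 0 := by decide
lemma c3sq_0 : (c3 * c3) 0 = 2 := by decide
lemma c3sq_1 : (c3 * c3) 1 = 0 := by decide
lemma c3sq_2 : (c3 * c3) 2 = 1 := by decide

lemma sign_one' : (((Equiv.Perm.sign (1 : Equiv.Perm (Fin 3)) : ℤ)) : ℂ) = 1 := by
  rw [show (Equiv.Perm.sign (1 : Equiv.Perm (Fin 3))) = 1 from by decide]; norm_num
lemma sign_s01 : (((Equiv.Perm.sign s01 : ℤ)) : ℂ) = -1 := by
  rw [show (Equiv.Perm.sign s01) = -1 from by decide]; norm_num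
lemma sign_s02 : (((Equiv.Perm.sign s02 : ℤ)) : ℂ) = -1 := by
  rw [show (Equiv.Perm.sign s02) = -1 from by decide]; norm_num
lemma sign_s12 : (((Equiv.Perm.sign s12 : ℤ)) : ℂ) = -1 := by
  rw [show (Equiv.Perm.sign s12) = -1 from by decide]; norm_num
lemma sign_c3 : (((Equiv.Perm.sign c3 : ℤ)) : ℂ) = 1 := by
  rw [show (Equiv.Perm.sign c3) = 1 from by decide]; norm_num
lemma sign_c3sq : (((Equiv.Perm.sign (c3 * c3) : ℤ)) : ℂ) = 1 := by
  rw [show (Equiv.Perm.sign (c3 * c3)) = 1 from by decide]; norm_num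

/-! Linearity of the partial traces. -/

lemma ptr1_add (A B : Matrix ((α × β) × γ) ((α × β) × γ) ℂ) :
    ptr1 (A + B) = ptr1 A + ptr1 B := by
  ext p q; simp [ptr1, Finset.sum_add_distrib]

lemma ptr1_smul (c : ℂ) (A : Matrix ((α × β) × γ) ((α × β) × γ) ℂ) :
    ptr1 (c • A) = c • ptr1 A := by
  ext p q; simp [ptr1, Finset.mul_sum]

lemma ptr2_add (A B : Matrix ((α × β) × γ) ((α × β) × γ) ℂ) :
    ptr2 (A + B) = ptr2 A + ptr2 B := by
  ext p q; simp [ptr2, Finset.sum_add_distrib]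

lemma ptr2_smul (c : ℂ) (A : Matrix ((α × β) × γ) ((α × β) × γ) ℂ) :
    ptr2 (c • A) = c • ptr2 A := by
  ext p q; simp [ptr2, Finset.mul_sum]

lemma ptr3_add (A B : Matrix ((α × β) × γ) ((α × β) × γ) ℂ) :
    ptr3 (A + B) = ptr3 A + ptr3 B := by
  ext p q; simp [ptr3, Finset.sum_add_distrib]

lemma ptr3_smul (c : ℂ) (A : Matrix ((α × β) × γ) ((α × β) × γ) ℂ) :
    ptr3 (c • A) = c • ptr3 A := by
  ext p q; simp [ptr3, Finset.mul_sum]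

/-! Partial traces of the permutation operators. -/

lemma ptr1_one (d : ℕ) :
    ptr1 (1 : Matrix ((Fin d × Fin d) × Fin d) ((Fin d × Fin d) × Fin d) ℂ)
      = (d : ℂ) • 1 := by
  ext ⟨b, k⟩ ⟨b', k'⟩
  simp only [ptr1, Matrix.smul_apply, Matrix.one_apply, Prod.ext_iff]
  by_cases h1 : b = b' <;> by_cases h2 : k = k' <;>
    simp [h1, h2, Finset.card_univ, mul_comm]

lemma ptr2_one (d : ℕ) :
    ptr2 (1 : Matrix ((Fin d × Fin d) × Fin d) ((Fin d × Fin d) × Fin d) ℂ)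
      = (d : ℂ) • 1 := by
  ext ⟨a, k⟩ ⟨a', k'⟩
  simp only [ptr2, Matrix.smul_apply, Matrix.one_apply, Prod.ext_iff]
  by_cases h1 : a = a' <;> by_cases h2 : k = k' <;>
    simp [h1, h2, Finset.card_univ, mul_comm]

lemma ptr3_one (d : ℕ) :
    ptr3 (1 : Matrix ((Fin d × Fin d) × Fin d) ((Fin d × Fin d) × Fin d) ℂ)
      = (d : ℂ) • 1 := by
  ext ⟨a, b⟩ ⟨a', b'⟩
  simp only [ptr3, Matrix.smul_apply, Matrix.one_apply, Prod.ext_iff]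
  by_cases h1 : a = a' <;> by_cases h2 : b = b' <;>
    simp [h1, h2, Finset.card_univ, mul_comm]

lemma permMat_one (d : ℕ) : permMat d 1 = 1 := by
  ext p q
  simp only [permMat, Matrix.one_apply, Equiv.Perm.one_apply]
  have : (∀ i, triple p i = triple q i) ↔ p = q := by
    constructor
    · intro h
      have : triple p = triple q := funext h
      rw [← mk3_triple p, this, mk3_triple]
    · rintro rfl i; rfl
  simp only [this]

end Auxiliary

section PtrPerm

variable (d : ℕ)

lemma ptr3_s01 : ptr3 (permMat d s01) = (d : ℂ) • swapMat d := by
  ext ⟨a, b⟩ ⟨a', b'⟩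
  simp only [ptr3, permMat, forall_fin3, triple, s01_0, s01_1, s01_2,
    Matrix.cons_val_zero, Matrix.cons_val_one, Matrix.head_cons,
    Matrix.cons_val_two, Matrix.tail_cons, eq_self_iff_true, and_true]
  by_cases h1 : b = a' <;> by_cases h2 : a = b' <;>
    simp [h1, h2, swapMat, Finset.card_univ, mul_comm]

lemma ptr3_s02 : ptr3 (permMat d s02) = 1 := by
  ext ⟨a, b⟩ ⟨a', b'⟩
  simp only [ptr3, permMat, forall_fin3, triple, s02_0, s02_1, s02_2,
    Matrix.cons_val_zero, Matrix.cons_val_one, Matrix.head_cons,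
    Matrix.cons_val_two, Matrix.tail_cons]
  have h : ∀ x : Fin d, (x = a' ∧ b = b' ∧ a = x) ↔ ((a = a' ∧ b = b') ∧ x = a) := by
    intro x; constructor
    · rintro ⟨rfl, rfl, rfl⟩; simp
    · rintro ⟨⟨rfl, rfl⟩, rfl⟩; simp
  simp only [h]
  by_cases hc : a = a' ∧ b = b' <;>
    simp [hc, Matrix.one_apply, Prod.ext_iff, ite_and]

lemma ptr3_s12 : ptr3 (permMat d s12) = 1 := by
  ext ⟨a, b⟩ ⟨a', b'⟩
  simp only [ptr3, permMat, forall_fin3, triple, s12_0, s12_1, s12_2,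
    Matrix.cons_val_zero, Matrix.cons_val_one, Matrix.head_cons,
    Matrix.cons_val_two, Matrix.tail_cons]
  have h : ∀ x : Fin d, (a = a' ∧ x = b' ∧ b = x) ↔ ((a = a' ∧ b = b') ∧ x = b) := by
    intro x; constructor
    · rintro ⟨rfl, rfl, rfl⟩; simp
    · rintro ⟨⟨rfl, rfl⟩, rfl⟩; simp
  simp only [h]
  by_cases hc : a = a' ∧ b = b' <;>
    simp [hc, Matrix.one_apply, Prod.ext_iff, ite_and]

lemma ptr3_c3 : ptr3 (permMat d c3) = swapMat d := by
  ext ⟨a, b⟩ ⟨a', b'⟩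
  simp only [ptr3, permMat, forall_fin3, triple, c3_0, c3_1, c3_2,
    Matrix.cons_val_zero, Matrix.cons_val_one, Matrix.head_cons,
    Matrix.cons_val_two, Matrix.tail_cons]
  have h : ∀ x : Fin d, (b = a' ∧ x = b' ∧ a = x) ↔ ((a = b' ∧ b = a') ∧ x = a) := by
    intro x; constructor
    · rintro ⟨rfl, rfl, rfl⟩; simp
    · rintro ⟨⟨rfl, rfl⟩, rfl⟩; simp
  simp only [h]
  by_cases hc : a = b' ∧ b = a' <;>
    simp [hc, swapMat, ite_and]

lemma ptr3_c3sq : ptr3 (permMat d (c3 * c3)) = swapMat d := by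
  ext ⟨a, b⟩ ⟨a', b'⟩
  simp only [ptr3, permMat, forall_fin3, triple, c3sq_0, c3sq_1, c3sq_2,
    Matrix.cons_val_zero, Matrix.cons_val_one, Matrix.head_cons,
    Matrix.cons_val_two, Matrix.tail_cons]
  have h : ∀ x : Fin d, (x = a' ∧ a = b' ∧ b = x) ↔ ((a = b' ∧ b = a') ∧ x = b) := by
    intro x; constructor
    · rintro ⟨rfl, rfl, rfl⟩; simp
    · rintro ⟨⟨rfl, rfl⟩, rfl⟩; simp
  simp only [h]
  by_cases hc : a = b' ∧ b = a' <;>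
    simp [hc, swapMat, ite_and]

lemma ptr1_s01 : ptr1 (permMat d s01) = 1 := by
  ext ⟨b, k⟩ ⟨b', k'⟩
  simp only [ptr1, permMat, forall_fin3, triple, s01_0, s01_1, s01_2,
    Matrix.cons_val_zero, Matrix.cons_val_one, Matrix.head_cons,
    Matrix.cons_val_two, Matrix.tail_cons]
  have h : ∀ x : Fin d, (b = x ∧ x = b' ∧ k = k') ↔ ((b = b' ∧ k = k') ∧ x = b) := by
    intro x; constructor
    · rintro ⟨rfl, rfl, rfl⟩; simp
    · rintro ⟨⟨rfl, rfl⟩, rfl⟩; simp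
  simp only [h]
  by_cases hc : b = b' ∧ k = k' <;>
    simp [hc, Matrix.one_apply, Prod.ext_iff, ite_and]

lemma ptr1_s02 : ptr1 (permMat d s02) = 1 := by
  ext ⟨b, k⟩ ⟨b', k'⟩
  simp only [ptr1, permMat, forall_fin3, triple, s02_0, s02_1, s02_2,
    Matrix.cons_val_zero, Matrix.cons_val_one, Matrix.head_cons,
    Matrix.cons_val_two, Matrix.tail_cons]
  have h : ∀ x : Fin d, (k = x ∧ b = b' ∧ x = k') ↔ ((b = b' ∧ k = k') ∧ x = k) := by
    intro x; constructor
    · rintro ⟨rfl, rfl, rfl⟩; simp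
    · rintro ⟨⟨rfl, rfl⟩, rfl⟩; simp
  simp only [h]
  by_cases hc : b = b' ∧ k = k' <;>
    simp [hc, Matrix.one_apply, Prod.ext_iff, ite_and]

lemma ptr1_s12 : ptr1 (permMat d s12) = (d : ℂ) • swapMat d := by
  ext ⟨b, k⟩ ⟨b', k'⟩
  simp only [ptr1, permMat, forall_fin3, triple, s12_0, s12_1, s12_2,
    Matrix.cons_val_zero, Matrix.cons_val_one, Matrix.head_cons,
    Matrix.cons_val_two, Matrix.tail_cons, eq_self_iff_true, true_and]
  by_cases h1 : k = b' <;> by_cases h2 : b = k' <;>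
    simp [h1, h2, swapMat, Finset.card_univ, mul_comm]

lemma ptr1_c3 : ptr1 (permMat d c3) = swapMat d := by
  ext ⟨b, k⟩ ⟨b', k'⟩
  simp only [ptr1, permMat, forall_fin3, triple, c3_0, c3_1, c3_2,
    Matrix.cons_val_zero, Matrix.cons_val_one, Matrix.head_cons,
    Matrix.cons_val_two, Matrix.tail_cons]
  have h : ∀ x : Fin d, (b = x ∧ k = b' ∧ x = k') ↔ ((b = k' ∧ k = b') ∧ x = b) := by
    intro x; constructor
    · rintro ⟨rfl, rfl, rfl⟩; simp
    · rintro ⟨⟨rfl, rfl⟩, rfl⟩; simp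
  simp only [h]
  by_cases hc : b = k' ∧ k = b' <;>
    simp [hc, swapMat, ite_and]

lemma ptr1_c3sq : ptr1 (permMat d (c3 * c3)) = swapMat d := by
  ext ⟨b, k⟩ ⟨b', k'⟩
  simp only [ptr1, permMat, forall_fin3, triple, c3sq_0, c3sq_1, c3sq_2,
    Matrix.cons_val_zero, Matrix.cons_val_one, Matrix.head_cons,
    Matrix.cons_val_two, Matrix.tail_cons]
  have h : ∀ x : Fin d, (k = x ∧ x = b' ∧ b = k') ↔ ((b = k' ∧ k = b') ∧ x = k) := by
    intro x; constructor
    · rintro ⟨rfl, rfl, rfl⟩; simp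
    · rintro ⟨⟨rfl, rfl⟩, rfl⟩; simp
  simp only [h]
  by_cases hc : b = k' ∧ k = b' <;>
    simp [hc, swapMat, ite_and]

lemma ptr2_s01 : ptr2 (permMat d s01) = 1 := by
  ext ⟨a, k⟩ ⟨a', k'⟩
  simp only [ptr2, permMat, forall_fin3, triple, s01_0, s01_1, s01_2,
    Matrix.cons_val_zero, Matrix.cons_val_one, Matrix.head_cons,
    Matrix.cons_val_two, Matrix.tail_cons]
  have h : ∀ x : Fin d, (x = a' ∧ a = x ∧ k = k') ↔ ((a = a' ∧ k = k') ∧ x = a) := by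
    intro x; constructor
    · rintro ⟨rfl, rfl, rfl⟩; simp
    · rintro ⟨⟨rfl, rfl⟩, rfl⟩; simp
  simp only [h]
  by_cases hc : a = a' ∧ k = k' <;>
    simp [hc, Matrix.one_apply, Prod.ext_iff, ite_and]

lemma ptr2_s02 : ptr2 (permMat d s02) = (d : ℂ) • swapMat d := by
  ext ⟨a, k⟩ ⟨a', k'⟩
  simp only [ptr2, permMat, forall_fin3, triple, s02_0, s02_1, s02_2,
    Matrix.cons_val_zero, Matrix.cons_val_one, Matrix.head_cons,
    Matrix.cons_val_two, Matrix.tail_cons, eq_self_iff_true, true_and]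
  by_cases h1 : k = a' <;> by_cases h2 : a = k' <;>
    simp [h1, h2, swapMat, Finset.card_univ, mul_comm, and_comm]

lemma ptr2_s12 : ptr2 (permMat d s12) = 1 := by
  ext ⟨a, k⟩ ⟨a', k'⟩
  simp only [ptr2, permMat, forall_fin3, triple, s12_0, s12_1, s12_2,
    Matrix.cons_val_zero, Matrix.cons_val_one, Matrix.head_cons,
    Matrix.cons_val_two, Matrix.tail_cons]
  have h : ∀ x : Fin d, (a = a' ∧ k = x ∧ x = k') ↔ ((a = a' ∧ k = k') ∧ x = k) := by
    intro x; constructor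
    · rintro ⟨rfl, rfl, rfl⟩; simp
    · rintro ⟨⟨rfl, rfl⟩, rfl⟩; simp
  simp only [h]
  by_cases hc : a = a' ∧ k = k' <;>
    simp [hc, Matrix.one_apply, Prod.ext_iff, ite_and]

lemma ptr2_c3 : ptr2 (permMat d c3) = swapMat d := by
  ext ⟨a, k⟩ ⟨a', k'⟩
  simp only [ptr2, permMat, forall_fin3, triple, c3_0, c3_1, c3_2,
    Matrix.cons_val_zero, Matrix.cons_val_one, Matrix.head_cons,
    Matrix.cons_val_two, Matrix.tail_cons]
  have h : ∀ x : Fin d, (x = a' ∧ k = x ∧ a = k') ↔ ((a = k' ∧ k = a') ∧ x = k) := by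
    intro x; constructor
    · rintro ⟨rfl, rfl, rfl⟩; simp
    · rintro ⟨⟨rfl, rfl⟩, rfl⟩; simp
  simp only [h]
  by_cases hc : a = k' ∧ k = a' <;>
    simp [hc, swapMat, ite_and]

lemma ptr2_c3sq : ptr2 (permMat d (c3 * c3)) = swapMat d := by
  ext ⟨a, k⟩ ⟨a', k'⟩
  simp only [ptr2, permMat, forall_fin3, triple, c3sq_0, c3sq_1, c3sq_2,
    Matrix.cons_val_zero, Matrix.cons_val_one, Matrix.head_cons,
    Matrix.cons_val_two, Matrix.tail_cons]
  have h : ∀ x : Fin d, (k = a' ∧ a = x ∧ x = k') ↔ ((a = k' ∧ k = a') ∧ x = a) := by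
    intro x; constructor
    · rintro ⟨rfl, rfl, rfl⟩; simp
    · rintro ⟨⟨rfl, rfl⟩, rfl⟩; simp
  simp only [h]
  by_cases hc : a = k' ∧ k = a' <;>
    simp [hc, swapMat, ite_and]

/-! Partial traces of the antisymmetrizer. -/

lemma ptr1_antisym : ptr1 (antisym d) = (((d : ℂ) - 2) / 6) • (1 - swapMat d) := by
  rw [antisym, sum_perm_fin3 (fun π => (((Equiv.Perm.sign π : ℤ) : ℂ)) • permMat d π)]
  rw [ptr1_smul]
  simp only [ptr1_add, ptr1_smul, permMat_one, ptr1_one, ptr1_s01, ptr1_s02, ptr1_s12,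
    ptr1_c3, ptr1_c3sq, sign_one', sign_s01, sign_s02, sign_s12, sign_c3, sign_c3sq]
  match_scalars <;> ring

lemma ptr2_antisym : ptr2 (antisym d) = (((d : ℂ) - 2) / 6) • (1 - swapMat d) := by
  rw [antisym, sum_perm_fin3 (fun π => (((Equiv.Perm.sign π : ℤ) : ℂ)) • permMat d π)]
  rw [ptr2_smul]
  simp only [ptr2_add, ptr2_smul, permMat_one, ptr2_one, ptr2_s01, ptr2_s02, ptr2_s12,
    ptr2_c3, ptr2_c3sq, sign_one', sign_s01, sign_s02, sign_s12, sign_c3, sign_c3sq]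
  match_scalars <;> ring

lemma ptr3_antisym : ptr3 (antisym d) = (((d : ℂ) - 2) / 6) • (1 - swapMat d) := by
  rw [antisym, sum_perm_fin3 (fun π => (((Equiv.Perm.sign π : ℤ) : ℂ)) • permMat d π)]
  rw [ptr3_smul]
  simp only [ptr3_add, ptr3_smul, permMat_one, ptr3_one, ptr3_s01, ptr3_s02, ptr3_s12,
    ptr3_c3, ptr3_c3sq, sign_one', sign_s01, sign_s02, sign_s12, sign_c3, sign_c3sq]
  match_scalars <;> ring

end PtrPerm

lemma trace_werner (d : ℕ) (hd : 1 ≤ d) : (werner d).trace = 1 := by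
  have htr1 : (1 : Matrix (Fin d × Fin d) (Fin d × Fin d) ℂ).trace = ((d : ℂ) * d) := by
    rw [Matrix.trace_one]
    simp [Fintype.card_prod]
  have htrV : (swapMat d).trace = (d : ℂ) := by
    simp only [Matrix.trace, Matrix.diag, swapMat, Fintype.sum_prod_type]
    have hcond : ∀ a b : Fin d, ((a = b ∧ b = a) ↔ b = a) := by tauto
    simp only [hcond]
    simp [Finset.sum_ite_eq, Finset.card_univ]
  have hd0 : (d : ℂ) ≠ 0 := Nat.cast_ne_zero.mpr (by omega)
  rw [werner, Matrix.trace_sub, Matrix.trace_smul, Matrix.trace_smul, htr1, htrV]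
  field_simp
  ring_nf
  have h3 : (d : ℂ) ^ 3 * (d : ℂ)⁻¹ ^ 3 = 1 := by rw [← mul_pow, mul_inv_cancel₀ hd0, one_pow]
  have h2 : (d : ℂ) ^ 2 * (d : ℂ)⁻¹ ^ 3 = (d : ℂ) * (d : ℂ)⁻¹ ^ 2 := by
    rw [pow_succ (d : ℂ)⁻¹ 2, pow_two (d : ℂ)]
    field_simp
  rw [h3, h2]
  ring


/-- for d ≥ 3, `R^{(d)} = (1/d⁴)·I + (6/(d²(d-2)))·Q_d^{(-)}` is a density
source-operator for the Werner state with the special dilation property, and hence the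
Werner state is a Bell class state. -/
theorem werner_isBellClass (d : ℕ) (hd : 3 ≤ d)
    (R : Matrix ((Fin d × Fin d) × Fin d) ((Fin d × Fin d) × Fin d) ℂ)
    (hR : R = ((d : ℂ) ^ 4)⁻¹ • (1 : Matrix ((Fin d × Fin d) × Fin d) ((Fin d × Fin d) × Fin d) ℂ)
        + (6 / ((d : ℂ) ^ 2 * ((d : ℂ) - 2))) • antisym d) :
    R.PosSemidef ∧ ptr1 R = werner d ∧ ptr2 R = werner d ∧ ptr3 R = werner d
      ∧ IsBellClass (werner d) := by
  have hd0 : (d : ℂ) ≠ 0 := Nat.cast_ne_zero.mpr (by omega)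
  have hd2 : (d : ℂ) - 2 ≠ 0 := by
    have : ((d - 2 : ℕ) : ℂ) = (d : ℂ) - 2 := by
      push_cast [Nat.cast_sub (by omega : 2 ≤ d)]
      ring
    rw [← this]
    exact Nat.cast_ne_zero.mpr (by omega)
  have hc1 : (0 : ℂ) ≤ ((d : ℂ) ^ 4)⁻¹ := by
    have : ((d : ℂ) ^ 4)⁻¹ = ((((d : ℝ) ^ 4)⁻¹ : ℝ) : ℂ) := by push_cast; ring
    rw [this]
    rw [Complex.zero_le_real]
    positivity
  have hc2 : (0 : ℂ) ≤ 6 / ((d : ℂ) ^ 2 * ((d : ℂ) - 2)) := by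
    have : 6 / ((d : ℂ) ^ 2 * ((d : ℂ) - 2))
        = (((6 / ((d : ℝ) ^ 2 * ((d : ℝ) - 2))) : ℝ) : ℂ) := by push_cast; ring
    rw [this, Complex.zero_le_real]
    have h3 : (3 : ℝ) ≤ (d : ℝ) := by exact_mod_cast hd
    have : (0 : ℝ) < (d : ℝ) - 2 := by linarith
    have hd' : (0 : ℝ) < (d : ℝ) := by linarith
    positivity
  have hPSD : R.PosSemidef := by
    rw [hR]
    exact (posSemidef_smul' Matrix.PosSemidef.one hc1).add
      (posSemidef_smul' (antisym_posSemidef d) hc2)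
  have hwern : ∀ pt : Matrix ((Fin d × Fin d) × Fin d) ((Fin d × Fin d) × Fin d) ℂ →
        Matrix (Fin d × Fin d) (Fin d × Fin d) ℂ,
      (∀ A B, pt (A + B) = pt A + pt B) →
      (∀ (c : ℂ) A, pt (c • A) = c • pt A) →
      pt 1 = (d : ℂ) • 1 →
      pt (antisym d) = (((d : ℂ) - 2) / 6) • (1 - swapMat d) →
      pt R = werner d := by
    intro pt hadd hsmul hone hanti
    rw [hR, hadd, hsmul, hsmul, hone, hanti, werner]
    match_scalars <;> field_simp <;> ring
  have h1 : ptr1 R = werner d := hwern _ ptr1_add ptr1_smul (ptr1_one d) (ptr1_antisym d)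
  have h2 : ptr2 R = werner d := hwern _ ptr2_add ptr2_smul (ptr2_one d) (ptr2_antisym d)
  have h3 : ptr3 R = werner d := hwern _ ptr3_add ptr3_smul (ptr3_one d) (ptr3_antisym d)
  have hdens : IsDensityMatrix (werner d) := by
    constructor
    · rw [← h3]
      exact posSemidef_ptr3 hPSD
    · exact trace_werner d (by omega)
  exact ⟨hPSD, h1, h2, h3, hdens, R, hPSD, h1, h2, h3⟩


end BellPaper
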